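/- Under the hypotheses ‖H_2^{-1}‖ ≤ M_1, ‖H_o‖ ≤ M_2, ‖H_d^{-1}‖ ≤ 1/(c - M_2) with c > M_2 + M_1 M_2², the block-inverse error satisfies ‖H^{-1} - [[H_2^{-1}, 0],[0, 0]]‖ ≤ (M_1 M_2 + 1)² / (c - M_2 - M_1 M_2²), where H = [[H_2, H_o^T],[H_o, H_d]]. -/

import Mathlib

open Matrix
open scoped Matrix.Norms.L2Operator

lemma aux_norm_one (n : ℕ) : ‖(1 : Matrix (Fin n) (Fin n) ℂ)‖ ≤ 1 := by
  rw [cstar_norm_def, _root_.map_one, ContinuousLinearMap.one_def]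
  exact ContinuousLinearMap.norm_id_le

lemma aux_mul_le {p q r : ℕ} (A : Matrix (Fin p) (Fin q) ℂ) (B : Matrix (Fin q) (Fin r) ℂ)
    {a b : ℝ} (ha : ‖A‖ ≤ a) (hb : ‖B‖ ≤ b) (ha0 : 0 ≤ a) : ‖A * B‖ ≤ a * b :=
  le_trans (l2_opNorm_mul _ _) (mul_le_mul ha hb (norm_nonneg _) ha0)

lemma aux_norm_star_vec (k : ℕ) (v : Fin k → ℂ) :
    ‖(EuclideanSpace.equiv (Fin k) ℂ).symm (star v)‖ = ‖(EuclideanSpace.equiv (Fin k) ℂ).symm v‖ := by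
  simp [EuclideanSpace.norm_eq]

lemma aux_map_star_le (k m : ℕ) (A : Matrix (Fin k) (Fin m) ℂ) :
    ‖A.map (starRingEnd ℂ)‖ ≤ ‖A‖ := by
  rw [l2_opNorm_def]
  refine ContinuousLinearMap.opNorm_le_bound _ (norm_nonneg A) fun x => ?_
  set x' : EuclideanSpace ℂ (Fin m) :=
    (EuclideanSpace.equiv (Fin m) ℂ).symm (star ((EuclideanSpace.equiv (Fin m) ℂ) x)) with hx'
  have e1 : (A.map (starRingEnd ℂ)) *ᵥ x = star (A *ᵥ x') := by
    funext i
    simp [hx', Matrix.mulVec, dotProduct, Pi.star_apply, star_sum, mul_comm]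
  calc ‖(EuclideanSpace.equiv (Fin k) ℂ).symm ((A.map (starRingEnd ℂ)) *ᵥ x)‖
      = ‖(EuclideanSpace.equiv (Fin k) ℂ).symm (star (A *ᵥ x'))‖ := by rw [e1]
    _ = ‖(EuclideanSpace.equiv (Fin k) ℂ).symm (A *ᵥ x')‖ := aux_norm_star_vec _ _
    _ ≤ ‖A‖ * ‖x'‖ := A.l2_opNorm_mulVec x'
    _ = ‖A‖ * ‖x‖ := by
        rw [hx']
        congr 1
        exact aux_norm_star_vec _ _

lemma aux_transpose_le (k m : ℕ) (A : Matrix (Fin k) (Fin m) ℂ) : ‖Aᵀ‖ ≤ ‖A‖ := by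
  have h : Aᵀ = (A.map (starRingEnd ℂ))ᴴ := by ext i j; simp
  rw [h, l2_opNorm_conjTranspose]
  exact aux_map_star_le k m A

noncomputable def auxE1 (m k : ℕ) : Matrix (Fin m ⊕ Fin k) (Fin m) ℂ :=
  Matrix.of fun i j => if i = Sum.inl j then 1 else 0

noncomputable def auxE2 (m k : ℕ) : Matrix (Fin m ⊕ Fin k) (Fin k) ℂ :=
  Matrix.of fun i j => if i = Sum.inr j then 1 else 0

lemma auxE1_mul (m k : ℕ) : (auxE1 m k)ᴴ * (auxE1 m k) = 1 := by
  ext i j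
  simp [auxE1, Matrix.mul_apply, Matrix.conjTranspose_apply, apply_ite, Matrix.one_apply, eq_comm]

lemma auxE2_mul (m k : ℕ) : (auxE2 m k)ᴴ * (auxE2 m k) = 1 := by
  ext i j
  simp [auxE2, Matrix.mul_apply, Matrix.conjTranspose_apply, apply_ite, Matrix.one_apply, eq_comm]

lemma auxE1_norm (m k : ℕ) : ‖auxE1 m k‖ ≤ 1 := by
  have h := l2_opNorm_conjTranspose_mul_self (auxE1 m k)
  rw [auxE1_mul] at h
  have := aux_norm_one m
  nlinarith [norm_nonneg (auxE1 m k)]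

lemma auxE2_norm (m k : ℕ) : ‖auxE2 m k‖ ≤ 1 := by
  have h := l2_opNorm_conjTranspose_mul_self (auxE2 m k)
  rw [auxE2_mul] at h
  have := aux_norm_one k
  nlinarith [norm_nonneg (auxE2 m k)]

lemma aux_fromBlocks_decomp (m k : ℕ) (A : Matrix (Fin m) (Fin m) ℂ)
    (B : Matrix (Fin m) (Fin k) ℂ) (C : Matrix (Fin k) (Fin m) ℂ) (D : Matrix (Fin k) (Fin k) ℂ) :
    Matrix.fromBlocks A B C D =
      auxE1 m k * A * (auxE1 m k)ᴴ + auxE1 m k * B * (auxE2 m k)ᴴ +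
      auxE2 m k * C * (auxE1 m k)ᴴ + auxE2 m k * D * (auxE2 m k)ᴴ := by
  ext (i|i) (j|j) <;>
    simp [auxE1, auxE2, Matrix.mul_apply, Matrix.conjTranspose_apply, Matrix.fromBlocks,
      apply_ite, Finset.sum_ite_eq]

lemma aux_fromBlocks_norm_le (m k : ℕ) (A : Matrix (Fin m) (Fin m) ℂ)
    (B : Matrix (Fin m) (Fin k) ℂ) (C : Matrix (Fin k) (Fin m) ℂ) (D : Matrix (Fin k) (Fin k) ℂ) :
    ‖Matrix.fromBlocks A B C D‖ ≤ ‖A‖ + ‖B‖ + ‖C‖ + ‖D‖ := by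
  have hterm : ∀ (p q : ℕ) (E : Matrix (Fin m ⊕ Fin k) (Fin p) ℂ)
      (F : Matrix (Fin m ⊕ Fin k) (Fin q) ℂ) (X : Matrix (Fin p) (Fin q) ℂ),
      ‖E‖ ≤ 1 → ‖F‖ ≤ 1 → ‖E * X * Fᴴ‖ ≤ ‖X‖ := by
    intro p q E F X hE hF
    have h1 : ‖E * X * Fᴴ‖ ≤ ‖E * X‖ * ‖Fᴴ‖ := l2_opNorm_mul _ _
    have h2 : ‖E * X‖ ≤ ‖E‖ * ‖X‖ := l2_opNorm_mul _ _
    have h3 : ‖Fᴴ‖ = ‖F‖ := l2_opNorm_conjTranspose _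
    nlinarith [norm_nonneg (E * X), norm_nonneg X, norm_nonneg E, norm_nonneg (Fᴴ), norm_nonneg F]
  rw [aux_fromBlocks_decomp]
  calc ‖auxE1 m k * A * (auxE1 m k)ᴴ + auxE1 m k * B * (auxE2 m k)ᴴ +
      auxE2 m k * C * (auxE1 m k)ᴴ + auxE2 m k * D * (auxE2 m k)ᴴ‖
      ≤ ‖auxE1 m k * A * (auxE1 m k)ᴴ‖ + ‖auxE1 m k * B * (auxE2 m k)ᴴ‖ +
        ‖auxE2 m k * C * (auxE1 m k)ᴴ‖ + ‖auxE2 m k * D * (auxE2 m k)ᴴ‖ := by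
          exact le_trans (norm_add_le _ _) (by gcongr; exact le_trans (norm_add_le _ _) (by gcongr; exact norm_add_le _ _))
    _ ≤ ‖A‖ + ‖B‖ + ‖C‖ + ‖D‖ := by
        gcongr <;> apply hterm <;> first | exact auxE1_norm m k | exact auxE2_norm m k

theorem stmt10 (m k : ℕ) (H2 : Matrix (Fin m) (Fin m) ℂ) (Ho : Matrix (Fin k) (Fin m) ℂ)
    (Hd : Matrix (Fin k) (Fin k) ℂ) (M1 M2 c : ℝ) (hM1 : 0 < M1) (hM2 : 0 < M2)
    (hc : M2 + M1 * M2 ^ 2 < c) (hH2 : IsUnit H2) (hHd : IsUnit Hd)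
    (h1 : ‖H2⁻¹‖ ≤ M1) (h2 : ‖Ho‖ ≤ M2) (h3 : ‖Hd⁻¹‖ ≤ 1 / (c - M2)) :
    ‖(Matrix.fromBlocks H2 Hoᵀ Ho Hd)⁻¹ - Matrix.fromBlocks H2⁻¹ 0 0 0‖ ≤
      (M1 * M2 + 1) ^ 2 / (c - M2 - M1 * M2 ^ 2) := by
  classical
  have hT : ‖Hoᵀ‖ ≤ M2 := le_trans (aux_transpose_le k m Ho) h2
  haveI : CompleteSpace (Matrix (Fin k) (Fin k) ℂ) := FiniteDimensional.complete ℂ _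
  have hcM2 : 0 < c - M2 := by nlinarith
  set t : ℝ := c - M2 - M1 * M2 ^ 2 with htdef
  have ht : 0 < t := by simp [htdef]; nlinarith
  have hHdd : IsUnit Hd.det := (Matrix.isUnit_iff_isUnit_det _).mp hHd
  set X : Matrix (Fin k) (Fin k) ℂ := Hd⁻¹ * (Ho * H2⁻¹ * Hoᵀ) with hXdef
  have hXb : ‖X‖ ≤ M1 * M2 ^ 2 / (c - M2) := by
    have : ‖X‖ ≤ (1 / (c - M2)) * (M2 * M1 * M2) :=
      aux_mul_le _ _ h3 (aux_mul_le _ _ (aux_mul_le _ _ h2 h1 hM2.le) hT (by positivity)) (by positivity)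
    calc ‖X‖ ≤ (1 / (c - M2)) * (M2 * M1 * M2) := this
      _ = M1 * M2 ^ 2 / (c - M2) := by ring
  have hXlt : ‖X‖ < 1 := lt_of_le_of_lt hXb (by rw [div_lt_one hcM2]; nlinarith)
  have hU : IsUnit (1 - X) := ⟨Units.oneSub X hXlt, rfl⟩
  set S : Matrix (Fin k) (Fin k) ℂ := Hd - Ho * H2⁻¹ * Hoᵀ with hSdef
  have hSfact : S = Hd * (1 - X) := by
    rw [Matrix.mul_sub, Matrix.mul_one, hXdef, ← Matrix.mul_assoc,
      Matrix.mul_nonsing_inv _ hHdd, Matrix.one_mul]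
  have hS : IsUnit S := hSfact ▸ hHd.mul hU
  -- bound on Y = (1 - X)⁻¹
  set Y : Matrix (Fin k) (Fin k) ℂ := (1 - X)⁻¹ with hYdef
  have hUY : (1 - X) * Y = 1 :=
    Matrix.mul_nonsing_inv _ ((Matrix.isUnit_iff_isUnit_det _).mp hU)
  have hYeq : Y = 1 + X * Y := by
    have := hUY
    rw [Matrix.sub_mul, Matrix.one_mul] at this
    conv_rhs => rw [← this]
    rw [sub_add_cancel]
  have hYb : ‖Y‖ ≤ (c - M2) / t := by
    have h5 : ‖Y‖ ≤ 1 + ‖X‖ * ‖Y‖ := by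
      calc ‖Y‖ = ‖(1 : Matrix (Fin k) (Fin k) ℂ) + X * Y‖ := by rw [← hYeq]
        _ ≤ ‖(1 : Matrix (Fin k) (Fin k) ℂ)‖ + ‖X * Y‖ := norm_add_le _ _
        _ ≤ 1 + ‖X‖ * ‖Y‖ := by
            gcongr
            · exact aux_norm_one k
            · exact l2_opNorm_mul _ _
    have hx0 : (0:ℝ) ≤ ‖X‖ := norm_nonneg _
    have hy0 : (0:ℝ) ≤ ‖Y‖ := norm_nonneg _
    have haX : ‖X‖ * (c - M2) ≤ M1 * M2 ^ 2 := by
      rw [← le_div_iff₀ hcM2]; exact hXb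
    rw [le_div_iff₀ ht]
    nlinarith [mul_le_mul_of_nonneg_left haX hy0, mul_le_mul_of_nonneg_right h5 hcM2.le]
  have hSinv : S⁻¹ = Y * Hd⁻¹ := by
    apply Matrix.inv_eq_left_inv
    rw [hSfact, Matrix.mul_assoc, ← Matrix.mul_assoc Hd⁻¹,
      Matrix.nonsing_inv_mul _ hHdd, Matrix.one_mul, hYdef,
      Matrix.nonsing_inv_mul _ ((Matrix.isUnit_iff_isUnit_det _).mp hU)]
  have hSb : ‖S⁻¹‖ ≤ 1 / t := by
    rw [hSinv]
    calc ‖Y * Hd⁻¹‖ ≤ ((c - M2) / t) * (1 / (c - M2)) :=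
          aux_mul_le _ _ hYb h3 (by positivity)
      _ = 1 / t := by field_simp
  -- the inverse formula
  letI iH2 : Invertible H2 := hH2.invertible
  have hinvOfH2 : ⅟H2 = H2⁻¹ := invOf_eq_nonsing_inv H2
  letI iS : Invertible (Hd - Ho * ⅟H2 * Hoᵀ) := by rw [hinvOfH2]; exact hS.invertible
  letI iH : Invertible (Matrix.fromBlocks H2 Hoᵀ Ho Hd) :=
    Matrix.fromBlocks₁₁Invertible H2 Hoᵀ Ho Hd
  have hfor : (Matrix.fromBlocks H2 Hoᵀ Ho Hd)⁻¹ =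
      Matrix.fromBlocks (H2⁻¹ + H2⁻¹ * Hoᵀ * S⁻¹ * Ho * H2⁻¹) (-(H2⁻¹ * Hoᵀ * S⁻¹))
        (-(S⁻¹ * Ho * H2⁻¹)) S⁻¹ := by
    rw [← Matrix.invOf_eq_nonsing_inv, Matrix.invOf_fromBlocks₁₁_eq]
    simp only [Matrix.invOf_eq_nonsing_inv, hSdef]
  have hdiff : (Matrix.fromBlocks H2 Hoᵀ Ho Hd)⁻¹ - Matrix.fromBlocks H2⁻¹ 0 0 0 =
      Matrix.fromBlocks (H2⁻¹ * Hoᵀ * S⁻¹ * Ho * H2⁻¹) (-(H2⁻¹ * Hoᵀ * S⁻¹))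
        (-(S⁻¹ * Ho * H2⁻¹)) S⁻¹ := by
    rw [hfor]
    ext (i|i) (j|j) <;> simp [Matrix.sub_apply]
  rw [hdiff]
  have b1 : ‖H2⁻¹ * Hoᵀ * S⁻¹ * Ho * H2⁻¹‖ ≤ M1 * M2 * (1 / t) * M2 * M1 :=
    aux_mul_le _ _ (aux_mul_le _ _ (aux_mul_le _ _ (aux_mul_le _ _ h1 hT hM1.le) hSb
      (by positivity)) h2 (by positivity)) h1 (by positivity)
  have b2 : ‖H2⁻¹ * Hoᵀ * S⁻¹‖ ≤ M1 * M2 * (1 / t) :=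
    aux_mul_le _ _ (aux_mul_le _ _ h1 hT hM1.le) hSb (by positivity)
  have b3 : ‖S⁻¹ * Ho * H2⁻¹‖ ≤ 1 / t * M2 * M1 :=
    aux_mul_le _ _ (aux_mul_le _ _ hSb h2 (by positivity)) h1 (by positivity)
  have key := aux_fromBlocks_norm_le m k (H2⁻¹ * Hoᵀ * S⁻¹ * Ho * H2⁻¹)
    (-(H2⁻¹ * Hoᵀ * S⁻¹)) (-(S⁻¹ * Ho * H2⁻¹)) S⁻¹
  rw [norm_neg, norm_neg] at key
  have harith : M1 * M2 * (1 / t) * M2 * M1 + M1 * M2 * (1 / t) + 1 / t * M2 * M1 + 1 / t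
      = (M1 * M2 + 1) ^ 2 / t := by
    field_simp
    ring
  linarith
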